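/- With Σ₀ as above (nonzero skew-symmetric 4×4 matrices with ‖e‖ = ‖m‖, e·m = 0), for every pair of points σ₀, σ ∈ Σ₀ there exists a proper orthochronous Lorentz transformation Λ ∈ SO⁺(1,3) such that σ = Λ σ₀ Λᵀ. -/

import Mathlib

open Matrix

noncomputable section

def eta : Matrix (Fin 4) (Fin 4) ℝ := Matrix.diagonal ![1, -1, -1, -1]

/-- The full Lorentz group O(1,3): Λᵀ η Λ = η. -/
def IsLorentz (Λ : Matrix (Fin 4) (Fin 4) ℝ) : Prop := Λᵀ * eta * Λ = eta

/-- Electric part of a skew-symmetric 4×4 matrix: e_k = σ_{0k}. -/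
def eVec (σ : Matrix (Fin 4) (Fin 4) ℝ) : Fin 3 → ℝ := ![σ 0 1, σ 0 2, σ 0 3]

/-- Magnetic part: m₁ = σ_{23}, m₂ = σ_{31}, m₃ = σ_{12}. -/
def mVec (σ : Matrix (Fin 4) (Fin 4) ℝ) : Fin 3 → ℝ := ![σ 2 3, σ 3 1, σ 1 2]

/-- Σ₀: nonzero skew-symmetric matrices with ‖e‖ = ‖m‖ and e·m = 0. -/
def InSigma0 (σ : Matrix (Fin 4) (Fin 4) ℝ) : Prop :=
  σᵀ = -σ ∧ σ ≠ 0 ∧ (∑ i, eVec σ i ^ 2) = (∑ i, mVec σ i ^ 2) ∧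
    (∑ i, eVec σ i * mVec σ i) = 0

set_option maxHeartbeats 1000000

section Aux

lemma eta_eq : eta = !![1,0,0,0; 0,-1,0,0; 0,0,-1,0; 0,0,0,-1] := by
  ext i j
  fin_cases i <;> fin_cases j <;>
    simp [eta, Matrix.diagonal, Matrix.vecHead, Matrix.vecTail]

lemma eta_sq : eta * eta = 1 := by
  rw [eta_eq]
  ext i j
  fin_cases i <;> fin_cases j <;>
    simp [Matrix.mul_apply, Fin.sum_univ_four, Matrix.one_apply, Matrix.vecHead, Matrix.vecTail]

lemma lorentz_mul {A B : Matrix (Fin 4) (Fin 4) ℝ} (hA : IsLorentz A) (hB : IsLorentz B) :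
    IsLorentz (A * B) := by
  unfold IsLorentz at *
  rw [Matrix.transpose_mul]
  calc Bᵀ * Aᵀ * eta * (A * B) = Bᵀ * (Aᵀ * eta * A) * B := by
        simp only [Matrix.mul_assoc]
    _ = eta := by rw [hA, hB]

lemma lorentz_symm {Λ : Matrix (Fin 4) (Fin 4) ℝ} (h : IsLorentz Λ) :
    Λ * eta * Λᵀ = eta := by
  have h1 : (eta * Λᵀ * eta) * Λ = 1 := by
    calc (eta * Λᵀ * eta) * Λ = eta * (Λᵀ * eta * Λ) := by simp only [Matrix.mul_assoc]
      _ = eta * eta := by rw [h]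
      _ = 1 := eta_sq
  have h2 : Λ * (eta * Λᵀ * eta) = 1 := mul_eq_one_comm.mp h1
  calc Λ * eta * Λᵀ = Λ * eta * Λᵀ * (eta * eta) := by rw [eta_sq, Matrix.mul_one]
    _ = (Λ * (eta * Λᵀ * eta)) * eta := by simp only [Matrix.mul_assoc]
    _ = eta := by rw [h2, Matrix.one_mul]

lemma lorentz_transpose {Λ : Matrix (Fin 4) (Fin 4) ℝ} (h : IsLorentz Λ) :
    IsLorentz Λᵀ := by
  unfold IsLorentz
  rw [Matrix.transpose_transpose]
  exact lorentz_symm h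

/-- Canonical element of Σ₀ : e = (1,0,0), m = (0,1,0). -/
def sigC : Matrix (Fin 4) (Fin 4) ℝ := !![0,1,0,0; -1,0,0,-1; 0,0,0,0; 0,1,0,0]

/-- Skew matrix with electric part e and magnetic part m. -/
def mkS (e m : Fin 3 → ℝ) : Matrix (Fin 4) (Fin 4) ℝ :=
  !![0, e 0, e 1, e 2;
     -e 0, 0, m 2, -m 1;
     -e 1, -m 2, 0, m 0;
     -e 2, m 1, -m 0, 0]

/-- Spatial rotation with columns u, v, u × v. -/
def rotB (u v : Fin 3 → ℝ) : Matrix (Fin 4) (Fin 4) ℝ :=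
  !![1,0,0,0;
     0, u 0, v 0, u 1 * v 2 - u 2 * v 1;
     0, u 1, v 1, u 2 * v 0 - u 0 * v 2;
     0, u 2, v 2, u 0 * v 1 - u 1 * v 0]

lemma rotB_transpose (u v : Fin 3 → ℝ) : (rotB u v)ᵀ =
    !![1,0,0,0;
       0, u 0, u 1, u 2;
       0, v 0, v 1, v 2;
       0, u 1 * v 2 - u 2 * v 1, u 2 * v 0 - u 0 * v 2, u 0 * v 1 - u 1 * v 0] := by
  ext i j
  fin_cases i <;> fin_cases j <;> simp [rotB, Matrix.vecHead, Matrix.vecTail]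

variable {u v : Fin 3 → ℝ}

lemma rotB_lorentz (hu : u 0^2 + u 1^2 + u 2^2 = 1) (hv : v 0^2 + v 1^2 + v 2^2 = 1)
    (huv : u 0 * v 0 + u 1 * v 1 + u 2 * v 2 = 0) : IsLorentz (rotB u v) := by
  unfold IsLorentz
  rw [rotB_transpose, eta_eq]
  ext i j
  fin_cases i <;> fin_cases j <;>
    simp [rotB, Matrix.mul_apply, Fin.sum_univ_four, Matrix.vecHead, Matrix.vecTail] <;>
    first
      | ring1
      | linear_combination hu
      | linear_combination -hu
      | linear_combination hv
      | linear_combination -hv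
      | linear_combination huv
      | linear_combination -huv
      | linear_combination (v 0^2 + v 1^2 + v 2^2) * hu + hv - (u 0*v 0 + u 1*v 1 + u 2*v 2) * huv
      | linear_combination -((v 0^2 + v 1^2 + v 2^2) * hu + hv - (u 0*v 0 + u 1*v 1 + u 2*v 2) * huv)

lemma rotB_orth (hu : u 0^2 + u 1^2 + u 2^2 = 1) (hv : v 0^2 + v 1^2 + v 2^2 = 1)
    (huv : u 0 * v 0 + u 1 * v 1 + u 2 * v 2 = 0) : (rotB u v)ᵀ * rotB u v = 1 := by
  rw [rotB_transpose]
  ext i j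
  fin_cases i <;> fin_cases j <;>
    simp [rotB, Matrix.mul_apply, Fin.sum_univ_four, Matrix.one_apply,
      Matrix.vecHead, Matrix.vecTail] <;>
    first
      | ring1
      | linear_combination hu
      | linear_combination -hu
      | linear_combination hv
      | linear_combination -hv
      | linear_combination huv
      | linear_combination -huv
      | linear_combination (v 0^2 + v 1^2 + v 2^2) * hu + hv - (u 0*v 0 + u 1*v 1 + u 2*v 2) * huv
      | linear_combination -((v 0^2 + v 1^2 + v 2^2) * hu + hv - (u 0*v 0 + u 1*v 1 + u 2*v 2) * huv)

lemma rotB_det (hu : u 0^2 + u 1^2 + u 2^2 = 1) (hv : v 0^2 + v 1^2 + v 2^2 = 1)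
    (huv : u 0 * v 0 + u 1 * v 1 + u 2 * v 2 = 0) : (rotB u v).det = 1 := by
  simp [rotB, Matrix.det_succ_row_zero, Fin.sum_univ_succ, Matrix.vecHead, Matrix.vecTail]
  linear_combination (v 0^2 + v 1^2 + v 2^2) * hu + hv - (u 0*v 0 + u 1*v 1 + u 2*v 2) * huv

lemma rotB_conj (hu : u 0^2 + u 1^2 + u 2^2 = 1) (hv : v 0^2 + v 1^2 + v 2^2 = 1)
    (huv : u 0 * v 0 + u 1 * v 1 + u 2 * v 2 = 0) :
    rotB u v * sigC * (rotB u v)ᵀ = mkS u v := by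
  rw [rotB_transpose]
  ext i j
  fin_cases i <;> fin_cases j <;>
    simp [rotB, sigC, mkS, Matrix.mul_apply, Fin.sum_univ_four,
      Matrix.vecHead, Matrix.vecTail] <;>
    first
      | ring1
      | linear_combination (v 0) * hu - (u 0) * huv
      | linear_combination -((v 0) * hu - (u 0) * huv)
      | linear_combination (v 1) * hu - (u 1) * huv
      | linear_combination -((v 1) * hu - (u 1) * huv)
      | linear_combination (v 2) * hu - (u 2) * huv
      | linear_combination -((v 2) * hu - (u 2) * huv)

/-- Boost along the z axis with Doppler factor s. -/
def Lb (s : ℝ) : Matrix (Fin 4) (Fin 4) ℝ :=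
  !![(s + s⁻¹)/2, 0, 0, (s - s⁻¹)/2;
     0, 1, 0, 0;
     0, 0, 1, 0;
     (s - s⁻¹)/2, 0, 0, (s + s⁻¹)/2]

lemma Lb_transpose (s : ℝ) : (Lb s)ᵀ = Lb s := by
  ext i j
  fin_cases i <;> fin_cases j <;> simp [Lb, Matrix.vecHead, Matrix.vecTail]

lemma Lb_key {s : ℝ} (hs : s ≠ 0) : ((s + s⁻¹)/2)^2 - ((s - s⁻¹)/2)^2 = 1 := by
  field_simp
  ring

lemma Lb_lorentz {s : ℝ} (hs : s ≠ 0) : IsLorentz (Lb s) := by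
  have key := Lb_key hs
  unfold IsLorentz
  rw [Lb_transpose, eta_eq]
  ext i j
  fin_cases i <;> fin_cases j <;>
    simp [Lb, Matrix.mul_apply, Fin.sum_univ_four, Matrix.vecHead, Matrix.vecTail] <;>
    first
      | ring1
      | linear_combination key
      | linear_combination -key

lemma Lb_det {s : ℝ} (hs : s ≠ 0) : (Lb s).det = 1 := by
  have key := Lb_key hs
  simp [Lb, Matrix.det_succ_row_zero, Fin.sum_univ_succ, Matrix.vecHead, Matrix.vecTail,
    Fin.castSucc, Fin.castAdd, Fin.castLE]
  rw [show (![0, 0, 1, 0] : Fin 4 → ℝ) (Fin.succAbove 3 2) = 1 from rfl]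
  linear_combination key

lemma Lb_conj (s : ℝ) : Lb s * sigC * Lb s = s • sigC := by
  ext i j
  fin_cases i <;> fin_cases j <;>
    simp [Lb, sigC, Matrix.mul_apply, Fin.sum_univ_four, Matrix.smul_apply,
      Matrix.vecHead, Matrix.vecTail] <;>
    ring1

/-- Decomposition of an element of Σ₀. -/
lemma decomp {σ : Matrix (Fin 4) (Fin 4) ℝ} (h : InSigma0 σ) :
    ∃ (r : ℝ) (u v : Fin 3 → ℝ), 0 < r ∧ (u 0^2 + u 1^2 + u 2^2 = 1) ∧ (v 0^2 + v 1^2 + v 2^2 = 1) ∧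
      (u 0 * v 0 + u 1 * v 1 + u 2 * v 2 = 0) ∧ σ = r • mkS u v := by
  obtain ⟨hsk, hne, heq, hperp⟩ := h
  have hs : ∀ i j, σ j i = -σ i j := by
    intro i j
    have := congrFun (congrFun hsk i) j
    simpa [Matrix.transpose_apply] using this
  have hmk : σ = mkS (eVec σ) (mVec σ) := by
    ext i j
    fin_cases i <;> fin_cases j <;>
      simp [mkS, eVec, mVec, Matrix.vecHead, Matrix.vecTail] <;>
      linarith [hs 0 0, hs 0 1, hs 0 2, hs 0 3, hs 1 1, hs 1 2, hs 1 3,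
        hs 2 2, hs 2 3, hs 3 3]
  simp only [eVec, mVec, Fin.sum_univ_three, Matrix.cons_val_zero, Matrix.cons_val_one,
    Matrix.head_cons, Matrix.cons_val_two, Matrix.tail_cons] at heq hperp
  have hpos : 0 < σ 0 1 ^ 2 + σ 0 2 ^ 2 + σ 0 3 ^ 2 := by
    rcases lt_or_eq_of_le (by positivity : (0:ℝ) ≤ σ 0 1 ^ 2 + σ 0 2 ^ 2 + σ 0 3 ^ 2) with h' | h'
    · exact h'
    · exfalso
      apply hne
      have h01 : σ 0 1 = 0 := by nlinarith [sq_nonneg (σ 0 1), sq_nonneg (σ 0 2), sq_nonneg (σ 0 3)]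
      have h02 : σ 0 2 = 0 := by nlinarith [sq_nonneg (σ 0 1), sq_nonneg (σ 0 2), sq_nonneg (σ 0 3)]
      have h03 : σ 0 3 = 0 := by nlinarith [sq_nonneg (σ 0 1), sq_nonneg (σ 0 2), sq_nonneg (σ 0 3)]
      have h23 : σ 2 3 = 0 := by nlinarith [sq_nonneg (σ 2 3), sq_nonneg (σ 3 1), sq_nonneg (σ 1 2)]
      have h31 : σ 3 1 = 0 := by nlinarith [sq_nonneg (σ 2 3), sq_nonneg (σ 3 1), sq_nonneg (σ 1 2)]
      have h12 : σ 1 2 = 0 := by nlinarith [sq_nonneg (σ 2 3), sq_nonneg (σ 3 1), sq_nonneg (σ 1 2)]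
      rw [hmk]
      ext i j
      fin_cases i <;> fin_cases j <;>
        simp [mkS, eVec, mVec, h01, h02, h03, h23, h31, h12, Matrix.vecHead, Matrix.vecTail]
  set S := σ 0 1 ^ 2 + σ 0 2 ^ 2 + σ 0 3 ^ 2 with hS
  set r := Real.sqrt S with hrdef
  have hr : 0 < r := Real.sqrt_pos.mpr hpos
  have hr0 : r ≠ 0 := ne_of_gt hr
  have hr2 : r ^ 2 = S := Real.sq_sqrt hpos.le
  refine ⟨r, ![σ 0 1 / r, σ 0 2 / r, σ 0 3 / r], ![σ 2 3 / r, σ 3 1 / r, σ 1 2 / r],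
    hr, ?_, ?_, ?_, ?_⟩
  · simp only [Matrix.cons_val_zero, Matrix.cons_val_one, Matrix.head_cons,
      Matrix.cons_val_two, Matrix.tail_cons]
    field_simp
    linarith [hr2, heq, hperp]
  · simp only [Matrix.cons_val_zero, Matrix.cons_val_one, Matrix.head_cons,
      Matrix.cons_val_two, Matrix.tail_cons]
    field_simp
    linarith [hr2, heq, hperp]
  · simp only [Matrix.cons_val_zero, Matrix.cons_val_one, Matrix.head_cons,
      Matrix.cons_val_two, Matrix.tail_cons]
    field_simp
    linarith [hr2, heq, hperp]
  · rw [hmk]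
    ext i j
    fin_cases i <;> fin_cases j <;>
      simp [mkS, eVec, mVec, Matrix.smul_apply, Matrix.vecHead, Matrix.vecTail] <;>
      (try field_simp) <;> (try ring1)

end Aux

/-- For every pair of points of Σ₀ there is a proper orthochronous Lorentz
transformation (det Λ = 1, Λ⁰₀ ≥ 1) carrying one to the other. -/
theorem stmt3 (σ₀ σ : Matrix (Fin 4) (Fin 4) ℝ)
    (h₀ : InSigma0 σ₀) (h : InSigma0 σ) :
    ∃ Λ : Matrix (Fin 4) (Fin 4) ℝ, IsLorentz Λ ∧ Λ.det = 1 ∧ 1 ≤ Λ 0 0 ∧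
      Λ * σ₀ * Λᵀ = σ := by
  obtain ⟨r₀, u₀, v₀, hr₀, hu₀, hv₀, huv₀, hσ₀⟩ := decomp h₀
  obtain ⟨r, u, v, hr, hu, hv, huv, hσ⟩ := decomp h
  set s := r / r₀ with hsdef
  have hspos : 0 < s := div_pos hr hr₀
  have hs0 : s ≠ 0 := ne_of_gt hspos
  set B := rotB u v with hB
  set B₀ := rotB u₀ v₀ with hB₀
  set L := Lb s with hL
  refine ⟨B * L * B₀ᵀ, ?_, ?_, ?_, ?_⟩
  · exact lorentz_mul (lorentz_mul (rotB_lorentz hu hv huv) (Lb_lorentz hs0))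
      (lorentz_transpose (rotB_lorentz hu₀ hv₀ huv₀))
  · rw [Matrix.det_mul, Matrix.det_mul, Matrix.det_transpose,
      rotB_det hu hv huv, rotB_det hu₀ hv₀ huv₀, Lb_det hs0]
    ring
  · have hval : (B * L * B₀ᵀ) 0 0 = (s + s⁻¹)/2 := by
      rw [hB, hB₀, hL, rotB_transpose]
      simp [rotB, Lb, Matrix.mul_apply, Fin.sum_univ_four, Matrix.vecHead, Matrix.vecTail]
    rw [hval]
    nlinarith [sq_nonneg (s - 1), mul_inv_cancel₀ hs0, hspos]
  · have hBB : B₀ᵀ * B₀ = 1 := rotB_orth hu₀ hv₀ huv₀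
    have hσ₀' : σ₀ = r₀ • (B₀ * sigC * B₀ᵀ) := by
      rw [rotB_conj hu₀ hv₀ huv₀]
      exact hσ₀
    have hT : (B * L * B₀ᵀ)ᵀ = B₀ * L * Bᵀ := by
      rw [Matrix.transpose_mul, Matrix.transpose_mul, Matrix.transpose_transpose,
        Lb_transpose, Matrix.mul_assoc]
    rw [hT, hσ₀']
    have lhs_eq : B * L * B₀ᵀ * (r₀ • (B₀ * sigC * B₀ᵀ)) * (B₀ * L * Bᵀ) =
        r₀ • (B * (L * sigC * L) * Bᵀ) := by
      rw [Matrix.mul_smul, Matrix.smul_mul]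
      congr 1
      calc B * L * B₀ᵀ * (B₀ * sigC * B₀ᵀ) * (B₀ * L * Bᵀ)
          = B * L * ((B₀ᵀ * B₀) * sigC * (B₀ᵀ * B₀)) * (L * Bᵀ) := by
            simp only [Matrix.mul_assoc]
        _ = B * L * sigC * (L * Bᵀ) := by rw [hBB, Matrix.one_mul, Matrix.mul_one]
        _ = B * (L * sigC * L) * Bᵀ := by simp only [Matrix.mul_assoc]
    rw [lhs_eq, Lb_conj]
    rw [Matrix.mul_smul, Matrix.smul_mul, smul_smul]
    rw [rotB_conj hu hv huv]
    have : r₀ * s = r := by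
      rw [hsdef]
      field_simp
    rw [this]
    exact hσ.symm
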